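/- Suppose (L_n) is a sequence of positive linear operators from the weighted space C_ρ([0,∞)) to B_ρ([0,∞)) with ρ(x) = 1 + x², such that ‖L_n(t^v; ·) − x^v‖_ρ → 0 for v = 0, 1, 2. Then for every f ∈ C_ρ^k([0,∞)) (continuous with f(x)/ρ(x) converging to a finite limit as x → ∞), ‖L_n f − f‖_ρ → 0, where ‖h‖_ρ = sup_{x≥0} |h(x)|/ρ(x). -/

import Mathlib

open Real Filter

set_option maxHeartbeats 1000000

/-- Gadjiev's weighted Korovkin theorem on `[0,∞)` with weight `ρ(x) = 1 + x²`:
if a sequence of positive linear operators mapping `C_ρ` to `B_ρ` satisfies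
`‖L_n(t^v;·) − x^v‖_ρ → 0` for `v = 0,1,2`, then `‖L_n f − f‖_ρ → 0` for every
`f ∈ C_ρ^k`. -/
theorem stmt14 (L : ℕ → (ℝ → ℝ) → ℝ → ℝ)
    (hadd : ∀ n (f g : ℝ → ℝ), L n (f + g) = L n f + L n g)
    (hsmul : ∀ n (c : ℝ) (f : ℝ → ℝ), L n (c • f) = c • L n f)
    (hmono : ∀ n (f g : ℝ → ℝ), (∀ t : ℝ, 0 ≤ t → f t ≤ g t) →
      ∀ x : ℝ, 0 ≤ x → L n f x ≤ L n g x)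
    (hmaps : ∀ n (f : ℝ → ℝ), ContinuousOn f (Set.Ici 0) →
      (∃ M : ℝ, ∀ x : ℝ, 0 ≤ x → |f x| ≤ M * (1 + x ^ 2)) →
      ∃ M : ℝ, ∀ x : ℝ, 0 ≤ x → |L n f x| ≤ M * (1 + x ^ 2))
    (hkor : ∀ v : ℕ, v ≤ 2 →
      Tendsto (fun n : ℕ =>
          ⨆ x : {x : ℝ // 0 ≤ x},
            |L n (fun t => t ^ v) x - (x : ℝ) ^ v| / (1 + (x : ℝ) ^ 2))
        atTop (nhds 0)) :
    ∀ f : ℝ → ℝ, ContinuousOn f (Set.Ici 0) →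
      (∃ M : ℝ, ∀ x : ℝ, 0 ≤ x → |f x| ≤ M * (1 + x ^ 2)) →
      (∃ l : ℝ, Tendsto (fun x : ℝ => f x / (1 + x ^ 2)) atTop (nhds l)) →
      Tendsto (fun n : ℕ =>
          ⨆ x : {x : ℝ // 0 ≤ x}, |L n f x - f x| / (1 + (x : ℝ) ^ 2))
        atTop (nhds 0) := by
  haveI : Nonempty {x : ℝ // 0 ≤ x} := ⟨⟨0, le_rfl⟩⟩
  have tri : ∀ a b : ℝ, |a - b| ≤ |a| + |b| := by
    intro a b
    rw [sub_eq_add_neg]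
    exact le_trans (abs_add_le _ _) (by rw [abs_neg])
  -- negation commutes with L
  have hneg : ∀ n (g : ℝ → ℝ), L n (fun t => -(g t)) = fun x => -(L n g x) := by
    intro n g
    have h1 : (fun t => -(g t)) = (-1 : ℝ) • g := by
      funext t; simp only [Pi.smul_apply, smul_eq_mul]; ring
    rw [h1, hsmul]; funext x; simp only [Pi.smul_apply, smul_eq_mul]; ring
  -- |L g| ≤ L b whenever |g| ≤ b on [0,∞)
  have habs : ∀ n (g b : ℝ → ℝ), (∀ t, 0 ≤ t → |g t| ≤ b t) →
      ∀ x, 0 ≤ x → |L n g x| ≤ L n b x := by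
    intro n g b hgb x hx
    rw [abs_le]
    constructor
    · have h1 := hmono n (fun t => -(g t)) b
        (fun t ht => le_trans (neg_le_abs (g t)) (hgb t ht)) x hx
      rw [hneg] at h1
      have h1' : -(L n g x) ≤ L n b x := h1
      linarith
    · exact hmono n g b (fun t ht => le_trans (le_abs_self _) (hgb t ht)) x hx
  -- powers are dominated by the weight
  have hpow : ∀ v : ℕ, v ≤ 2 → ∀ x : ℝ, 0 ≤ x → |x ^ v| ≤ 1 * (1 + x ^ 2) := by
    intro v hv x hx
    rw [abs_of_nonneg (pow_nonneg hx _)]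
    interval_cases v
    · norm_num; positivity
    · rw [pow_one]; nlinarith [sq_nonneg (x - 1)]
    · nlinarith [sq_nonneg x]
  -- key: pointwise bound extracted from the sup
  have key : ∀ v : ℕ, v ≤ 2 → ∀ n, ∀ x : ℝ, 0 ≤ x →
      |L n (fun t => t ^ v) x - x ^ v| ≤
        (⨆ y : {y : ℝ // 0 ≤ y},
          |L n (fun t => t ^ v) y - (y : ℝ) ^ v| / (1 + (y : ℝ) ^ 2)) * (1 + x ^ 2) := by
    intro v hv n x hx
    obtain ⟨Mv, hMv⟩ := hmaps n (fun t => t ^ v) (continuous_pow v).continuousOn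
      ⟨1, fun t ht => hpow v hv t ht⟩
    have hbdd : BddAbove (Set.range fun y : {y : ℝ // 0 ≤ y} =>
        |L n (fun t => t ^ v) y - (y : ℝ) ^ v| / (1 + (y : ℝ) ^ 2)) := by
      refine ⟨Mv + 1, ?_⟩
      rintro r ⟨⟨y, hy⟩, rfl⟩
      have h1 := hMv y hy
      have h2 := hpow v hv y hy
      have hρ : (0:ℝ) < 1 + y ^ 2 := by positivity
      rw [div_le_iff₀ hρ]
      have h3 := tri (L n (fun t => t ^ v) y) (y ^ v)
      linarith only [h1, h2, h3]
    have h3 := le_ciSup hbdd (⟨x, hx⟩ : {y : ℝ // 0 ≤ y})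
    have hρ : (0:ℝ) < 1 + x ^ 2 := by positivity
    exact (div_le_iff₀ hρ).mp h3
  have hsupnn : ∀ v : ℕ, ∀ n, (0:ℝ) ≤
      ⨆ y : {y : ℝ // 0 ≤ y},
        |L n (fun t => t ^ v) y - (y : ℝ) ^ v| / (1 + (y : ℝ) ^ 2) :=
    fun v n => Real.iSup_nonneg fun y => div_nonneg (abs_nonneg _) (by positivity)
  intro f hfc hMf hlf
  obtain ⟨M₀, hM₀⟩ := hMf
  obtain ⟨l, hl⟩ := hlf
  set M := |M₀| with hMdef
  have hMnn : 0 ≤ M := abs_nonneg _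
  have hM : ∀ x : ℝ, 0 ≤ x → |f x| ≤ M * (1 + x ^ 2) := by
    intro x hx
    refine le_trans (hM₀ x hx) ?_
    exact mul_le_mul_of_nonneg_right (le_abs_self M₀) (by positivity)
  rw [Metric.tendsto_atTop]
  intro ε hε
  set ε' := ε / 8 with hε'def
  have hε' : 0 < ε' := by positivity
  -- choose x₀
  have h1 : ∀ᶠ x in atTop, |f x / (1 + x ^ 2) - l| < ε' := by
    have h2 := hl.eventually (Metric.ball_mem_nhds l hε')
    filter_upwards [h2] with x hx
    simpa [Metric.mem_ball, Real.dist_eq] using hx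
  obtain ⟨x₀', hx₀'⟩ := eventually_atTop.mp h1
  set x₀ := max x₀' 0 with hx₀def
  have hx₀nn : 0 ≤ x₀ := le_max_right _ _
  have htail : ∀ t : ℝ, x₀ ≤ t → |f t - l * (1 + t ^ 2)| ≤ ε' * (1 + t ^ 2) := by
    intro t ht
    have h2 := hx₀' t (le_trans (le_max_left _ _) ht)
    have hρ : (0:ℝ) < 1 + t ^ 2 := by positivity
    have h3 : f t - l * (1 + t ^ 2) = (f t / (1 + t ^ 2) - l) * (1 + t ^ 2) := by
      field_simp
    rw [h3, abs_mul, abs_of_pos hρ]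
    exact mul_le_mul_of_nonneg_right h2.le hρ.le
  set C := (M + |l|) * (1 + x₀ ^ 2) with hCdef
  have hCnn : 0 ≤ C := by positivity
  have hgb : ∀ t : ℝ, 0 ≤ t → |f t - l * (1 + t ^ 2)| ≤ ε' * (1 + t ^ 2) + C := by
    intro t ht
    rcases le_total t x₀ with hc | hc
    · have h2 : |f t - l * (1 + t ^ 2)| ≤ |f t| + |l| * (1 + t ^ 2) := by
        refine le_trans (tri _ _) ?_
        rw [abs_mul, abs_of_pos (by positivity : (0:ℝ) < 1 + t ^ 2)]
      have h3 := hM t ht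
      have h4 : (1 : ℝ) + t ^ 2 ≤ 1 + x₀ ^ 2 := by
        have := pow_le_pow_left₀ ht hc 2
        linarith only [this]
      have h4p := mul_le_mul_of_nonneg_left h4 (add_nonneg hMnn (abs_nonneg l))
      have h5 : (0:ℝ) ≤ ε' * (1 + t ^ 2) := by positivity
      linarith only [h2, h3, h4p, hCdef, h5]
    · exact le_trans (htail t hc) (by linarith)
  set x₁ := max (max x₀ 1) (C / ε') with hx₁def
  have hx₁x₀ : x₀ ≤ x₁ := le_trans (le_max_left _ _) (le_max_left _ _)
  have hx₁1 : (1:ℝ) ≤ x₁ := le_trans (le_max_right _ _) (le_max_left _ _)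
  have hx₁nn : (0:ℝ) ≤ x₁ := by linarith
  have hx₁C : C ≤ ε' * (1 + x₁ ^ 2) := by
    have h2 : C / ε' ≤ x₁ := le_max_right _ _
    rw [div_le_iff₀ hε'] at h2
    have h3 : x₁ ≤ 1 + x₁ ^ 2 := by linarith only [sq_nonneg (x₁ - 1), hx₁nn]
    have h4 := mul_le_mul_of_nonneg_left h3 hε'.le
    linarith only [h2, h4]
  -- uniform continuity on [0, x₁ + 1]
  have hcomp : IsCompact (Set.Icc (0:ℝ) (x₁ + 1)) := isCompact_Icc
  have huc : UniformContinuousOn f (Set.Icc 0 (x₁ + 1)) :=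
    hcomp.uniformContinuousOn_of_continuous (hfc.mono (fun y hy => hy.1))
  rw [Metric.uniformContinuousOn_iff] at huc
  obtain ⟨δ₀, hδ₀, hδ⟩ := huc ε' hε'
  set δ := min (δ₀ / 2) 1 with hδdef
  have hδpos : 0 < δ := lt_min (by linarith) one_pos
  have hδ1 : δ ≤ 1 := min_le_right _ _
  have hδsq : δ ^ 2 ≤ 1 := by
    have := pow_le_pow_left₀ hδpos.le hδ1 2
    rwa [one_pow] at this
  have hδδ₀ : δ < δ₀ := lt_of_le_of_lt (min_le_left _ _) (by linarith)
  set K := M * (4 + 3 * x₁ ^ 2) / δ ^ 2 with hKdef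
  have hKnn : 0 ≤ K := by positivity
  have hKδ : K * δ ^ 2 = M * (4 + 3 * x₁ ^ 2) := by
    rw [hKdef]
    field_simp
  -- pointwise estimate on compact part
  have hpt : ∀ x : ℝ, 0 ≤ x → x ≤ x₁ → ∀ t : ℝ, 0 ≤ t →
      |f t - f x| ≤ ε' + K * (t - x) ^ 2 := by
    intro x hx hxx₁ t ht
    rcases le_or_gt |t - x| δ with hcase | hcase
    · have habs' := abs_le.mp hcase
      have hmx : x ∈ Set.Icc (0:ℝ) (x₁ + 1) := ⟨hx, by linarith⟩
      have hmt : t ∈ Set.Icc (0:ℝ) (x₁ + 1) := ⟨ht, by linarith⟩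
      have h2 := hδ t hmt x hmx (by rw [Real.dist_eq]; exact lt_of_le_of_lt hcase hδδ₀)
      rw [Real.dist_eq] at h2
      linarith [mul_nonneg hKnn (sq_nonneg (t - x))]
    · have h2 : δ ^ 2 ≤ (t - x) ^ 2 := by
        have h3 := pow_le_pow_left₀ hδpos.le hcase.le 2
        rwa [sq_abs] at h3
      have h3 : |f t - f x| ≤ M * (1 + t ^ 2) + M * (1 + x ^ 2) :=
        le_trans (tri _ _) (add_le_add (hM t ht) (hM x hx))
      have hK2M : 2 * M ≤ K := by
        have p1 : 0 ≤ K * (1 - δ ^ 2) := mul_nonneg hKnn (by linarith only [hδsq])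
        have p2 : 0 ≤ M * x₁ ^ 2 := mul_nonneg hMnn (sq_nonneg x₁)
        linarith only [p1, p2, hKδ, hMnn]
      have q1 : 0 ≤ (K - 2 * M) * ((t - x) ^ 2 - δ ^ 2) :=
        mul_nonneg (sub_nonneg.mpr hK2M) (sub_nonneg.mpr h2)
      have q2 : 0 ≤ M * (t - 2 * x) ^ 2 := mul_nonneg hMnn (sq_nonneg _)
      have q3 : 0 ≤ M * (1 - δ ^ 2) := mul_nonneg hMnn (by linarith only [hδsq])
      have q4 : 0 ≤ M * ((x₁ - x) * (x₁ + x)) :=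
        mul_nonneg hMnn (mul_nonneg (by linarith only [hxx₁]) (by linarith only [hx, hx₁nn]))
      linarith only [q1, q2, q3, q4, hKδ, hε'.le, h3]
  -- linearity computations
  have hLh : ∀ n (c : ℝ), L n (fun t => f t - c) =
      fun y => L n f y - c * L n (fun t : ℝ => t ^ 0) y := by
    intro n c
    have h2 : (fun t => f t - c) = f + (-c) • (fun t : ℝ => t ^ 0) := by
      funext t
      simp only [Pi.add_apply, Pi.smul_apply, smul_eq_mul, pow_zero]
      ring
    rw [h2]
    simp only [hadd, hsmul]
    funext y
    simp only [Pi.add_apply, Pi.smul_apply, smul_eq_mul]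
    try ring
  have hLb : ∀ n (x : ℝ), L n (fun t => ε' + K * (t - x) ^ 2) =
      fun y => ε' * L n (fun t : ℝ => t ^ 0) y +
        K * (L n (fun t : ℝ => t ^ 2) y - 2 * x * L n (fun t : ℝ => t ^ 1) y +
          x ^ 2 * L n (fun t : ℝ => t ^ 0) y) := by
    intro n x
    have h2 : (fun t => ε' + K * (t - x) ^ 2) =
        ε' • (fun t : ℝ => t ^ 0) + K • ((fun t : ℝ => t ^ 2) +
          (-(2 * x)) • (fun t : ℝ => t ^ 1) + (x ^ 2) • (fun t : ℝ => t ^ 0)) := by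
      funext t
      simp only [Pi.add_apply, Pi.smul_apply, smul_eq_mul, pow_zero, pow_one]
      ring
    rw [h2]
    simp only [hadd, hsmul]
    funext y
    simp only [Pi.add_apply, Pi.smul_apply, smul_eq_mul]
    try ring
  have hLg : ∀ n, L n (fun t => f t - l * (1 + t ^ 2)) =
      fun y => L n f y - l * (L n (fun t : ℝ => t ^ 0) y + L n (fun t : ℝ => t ^ 2) y) := by
    intro n
    have h2 : (fun t => f t - l * (1 + t ^ 2)) =
        f + (-l) • ((fun t : ℝ => t ^ 0) + (fun t : ℝ => t ^ 2)) := by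
      funext t
      simp only [Pi.add_apply, Pi.smul_apply, smul_eq_mul, pow_zero]
      ring
    rw [h2]
    simp only [hadd, hsmul]
    funext y
    simp only [Pi.add_apply, Pi.smul_apply, smul_eq_mul]
    try ring
  have hLbt : ∀ n, L n (fun t => ε' * (1 + t ^ 2) + C) =
      fun y => ε' * (L n (fun t : ℝ => t ^ 0) y + L n (fun t : ℝ => t ^ 2) y) +
        C * L n (fun t : ℝ => t ^ 0) y := by
    intro n
    have h2 : (fun t => ε' * (1 + t ^ 2) + C) =
        ε' • ((fun t : ℝ => t ^ 0) + (fun t : ℝ => t ^ 2)) + C • (fun t : ℝ => t ^ 0) := by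
      funext t
      simp only [Pi.add_apply, Pi.smul_apply, smul_eq_mul, pow_zero]
      ring
    rw [h2]
    simp only [hadd, hsmul]
    funext y
    simp only [Pi.add_apply, Pi.smul_apply, smul_eq_mul]
    try ring
  -- choose η and N
  set D := C + 2 * |l| + K * (1 + 2 * x₁ + x₁ ^ 2) + M * (1 + x₁ ^ 2) with hDdef
  have hx₁poly : (0:ℝ) ≤ 1 + 2 * x₁ + x₁ ^ 2 := by positivity
  have hDnn : 0 ≤ D := by
    rw [hDdef]
    have h3 : (0:ℝ) ≤ M * (1 + x₁ ^ 2) := mul_nonneg hMnn (by positivity)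
    have h4 : (0:ℝ) ≤ K * (1 + 2 * x₁ + x₁ ^ 2) := mul_nonneg hKnn hx₁poly
    linarith only [hCnn, abs_nonneg l, h3, h4]
  set η := min 1 (ε' / (D + 1)) with hηdef
  have hηpos : 0 < η := lt_min one_pos (by positivity)
  have hη1 : η ≤ 1 := min_le_left _ _
  have hηD : (C + 2 * |l| + K * (1 + 2 * x₁ + x₁ ^ 2) + M * (1 + x₁ ^ 2)) * η ≤ ε' := by
    have h2 : η ≤ ε' / (D + 1) := min_le_right _ _
    rw [le_div_iff₀ (by linarith)] at h2
    rw [← hDdef]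
    linarith only [h2, hηpos.le]
  have ev0 := (hkor 0 (by norm_num)).eventually (gt_mem_nhds hηpos)
  have ev1 := (hkor 1 (by norm_num)).eventually (gt_mem_nhds hηpos)
  have ev2 := (hkor 2 (by norm_num)).eventually (gt_mem_nhds hηpos)
  obtain ⟨N, hN⟩ := eventually_atTop.mp ((ev0.and ev1).and ev2)
  refine ⟨N, fun n hn => ?_⟩
  obtain ⟨⟨hA0, hA1⟩, hA2⟩ := hN n hn
  set A0 := ⨆ y : {y : ℝ // 0 ≤ y},
      |L n (fun t => t ^ 0) y - (y : ℝ) ^ 0| / (1 + (y : ℝ) ^ 2) with hA0def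
  set A1 := ⨆ y : {y : ℝ // 0 ≤ y},
      |L n (fun t => t ^ 1) y - (y : ℝ) ^ 1| / (1 + (y : ℝ) ^ 2) with hA1def
  set A2 := ⨆ y : {y : ℝ // 0 ≤ y},
      |L n (fun t => t ^ 2) y - (y : ℝ) ^ 2| / (1 + (y : ℝ) ^ 2) with hA2def
  have hA0nn : 0 ≤ A0 := hsupnn 0 n
  have hA1nn : 0 ≤ A1 := hsupnn 1 n
  have hA2nn : 0 ≤ A2 := hsupnn 2 n
  have hη0 : A0 ≤ η := hA0.le
  have hη1' : A1 ≤ η := hA1.le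
  have hη2 : A2 ≤ η := hA2.le
  -- main pointwise bound
  have main : ∀ x : ℝ, 0 ≤ x → |L n f x - f x| / (1 + x ^ 2) ≤ 6 * ε' := by
    intro x hx
    have hρ : (0:ℝ) < 1 + x ^ 2 := by positivity
    rw [div_le_iff₀ hρ]
    have k0 := key 0 (by norm_num) n x hx
    have k1 := key 1 (by norm_num) n x hx
    have k2 := key 2 (by norm_num) n x hx
    rw [← hA0def] at k0
    rw [← hA1def] at k1
    rw [← hA2def] at k2
    rw [pow_zero x] at k0
    rw [pow_one x] at k1
    have k0' := abs_le.mp k0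
    have k1' := abs_le.mp k1
    have k2' := abs_le.mp k2
    have t4 : L n (fun t : ℝ => t ^ 0) x ≤ 1 + A0 * (1 + x ^ 2) := by linarith [k0'.2]
    rcases le_total x x₁ with hcase | hcase
    · -- compact part
      have hxsq : x ^ 2 ≤ x₁ ^ 2 := pow_le_pow_left₀ hx hcase 2
      have e1 := habs n (fun t => f t - f x) (fun t => ε' + K * (t - x) ^ 2)
        (fun t ht => hpt x hx hcase t ht) x hx
      simp only [hLh, hLb] at e1
      have hfx := hM x hx
      have hρ₁ : 1 + x ^ 2 ≤ 1 + x₁ ^ 2 := by linarith only [hxsq]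
      have t1 : |L n f x - f x| ≤ |L n f x - f x * L n (fun t : ℝ => t ^ 0) x| +
          |f x| * |L n (fun t : ℝ => t ^ 0) x - 1| := by
        have h2 : L n f x - f x = (L n f x - f x * L n (fun t : ℝ => t ^ 0) x) +
            f x * (L n (fun t : ℝ => t ^ 0) x - 1) := by ring
        rw [h2]
        exact le_trans (abs_add_le _ _) (by rw [abs_mul])
      have t2 : |f x| * |L n (fun t : ℝ => t ^ 0) x - 1| ≤
          M * (1 + x₁ ^ 2) * (A0 * (1 + x ^ 2)) := by
        have h2 : |f x| * |L n (fun t : ℝ => t ^ 0) x - 1| ≤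
            M * (1 + x ^ 2) * (A0 * (1 + x ^ 2)) :=
          mul_le_mul hfx k0 (abs_nonneg _) (by positivity)
        refine le_trans h2 ?_
        exact mul_le_mul_of_nonneg_right (mul_le_mul_of_nonneg_left hρ₁ hMnn)
          (mul_nonneg hA0nn hρ.le)
      have t3 : L n (fun t : ℝ => t ^ 2) x - 2 * x * L n (fun t : ℝ => t ^ 1) x +
          x ^ 2 * L n (fun t : ℝ => t ^ 0) x ≤
          (A2 + 2 * x₁ * A1 + x₁ ^ 2 * A0) * (1 + x ^ 2) := by
        have b1 := k2'.2
        have b2 := mul_le_mul_of_nonneg_left k1'.1 (by linarith only [hx] : (0:ℝ) ≤ 2 * x)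
        have b3 := mul_le_mul_of_nonneg_left k0'.2 (sq_nonneg x)
        have b4 := mul_le_mul_of_nonneg_right
          (by linarith only [hcase] : 2 * x ≤ 2 * x₁) (mul_nonneg hA1nn hρ.le)
        have b5 := mul_le_mul_of_nonneg_right hxsq (mul_nonneg hA0nn hρ.le)
        linarith only [b1, b2, b3, b4, b5]
      have e1' := abs_le.mp e1
      have t5 : |L n f x - f x| ≤ ε' * (1 + A0 * (1 + x ^ 2)) +
          K * ((A2 + 2 * x₁ * A1 + x₁ ^ 2 * A0) * (1 + x ^ 2)) +
          M * (1 + x₁ ^ 2) * (A0 * (1 + x ^ 2)) := by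
        have h6 : ε' * L n (fun t : ℝ => t ^ 0) x ≤ ε' * (1 + A0 * (1 + x ^ 2)) :=
          mul_le_mul_of_nonneg_left t4 hε'.le
        have h7 : K * (L n (fun t : ℝ => t ^ 2) x - 2 * x * L n (fun t : ℝ => t ^ 1) x +
            x ^ 2 * L n (fun t : ℝ => t ^ 0) x) ≤
            K * ((A2 + 2 * x₁ * A1 + x₁ ^ 2 * A0) * (1 + x ^ 2)) :=
          mul_le_mul_of_nonneg_left t3 hKnn
        linarith [e1'.2, t1, t2]
      -- numeric step
      have u5 : ε' * A0 ≤ ε' := by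
        have w1 := mul_le_mul_of_nonneg_left hη0 hε'.le
        have w2 := mul_le_mul_of_nonneg_left hη1 hε'.le
        linarith only [w1, w2]
      have u6 : K * (A2 + 2 * x₁ * A1 + x₁ ^ 2 * A0) + M * (1 + x₁ ^ 2) * A0 ≤ ε' := by
        have w1 : K * A2 ≤ K * η := mul_le_mul_of_nonneg_left hη2 hKnn
        have w2 : K * (2 * x₁) * A1 ≤ K * (2 * x₁) * η :=
          mul_le_mul_of_nonneg_left hη1' (mul_nonneg hKnn (by linarith only [hx₁nn]))
        have w3 : K * x₁ ^ 2 * A0 ≤ K * x₁ ^ 2 * η :=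
          mul_le_mul_of_nonneg_left hη0 (mul_nonneg hKnn (sq_nonneg x₁))
        have w4 : M * (1 + x₁ ^ 2) * A0 ≤ M * (1 + x₁ ^ 2) * η :=
          mul_le_mul_of_nonneg_left hη0 (mul_nonneg hMnn (by positivity))
        have w5 : 0 ≤ C * η := mul_nonneg hCnn hηpos.le
        have w6 : 0 ≤ |l| * η := mul_nonneg (abs_nonneg l) hηpos.le
        linarith only [w1, w2, w3, w4, w5, w6, hηD]
      have m5 := mul_le_mul_of_nonneg_right u5 hρ.le
      have m6 := mul_le_mul_of_nonneg_right u6 hρ.le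
      have mε : ε' * 1 ≤ ε' * (1 + x ^ 2) :=
        mul_le_mul_of_nonneg_left (by linarith only [sq_nonneg x]) hε'.le
      have mεnn : 0 ≤ ε' * (1 + x ^ 2) := mul_nonneg hε'.le hρ.le
      linarith only [t5, m5, m6, mε, mεnn]
    · -- tail part
      have hx₀x : x₀ ≤ x := le_trans hx₁x₀ hcase
      have hxsq : x₁ ^ 2 ≤ x ^ 2 := pow_le_pow_left₀ hx₁nn hcase 2
      have e2 := habs n (fun t => f t - l * (1 + t ^ 2)) (fun t => ε' * (1 + t ^ 2) + C)
        hgb x hx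
      simp only [hLg, hLbt] at e2
      have hgx := htail x hx₀x
      have hCx : C ≤ ε' * (1 + x ^ 2) := by
        refine le_trans hx₁C ?_
        exact mul_le_mul_of_nonneg_left (by linarith only [hxsq]) hε'.le
      have t8 : L n (fun t : ℝ => t ^ 2) x ≤ x ^ 2 + A2 * (1 + x ^ 2) := by
        linarith [k2'.2]
      have t6 : |L n f x - f x| ≤
          |L n f x - l * (L n (fun t : ℝ => t ^ 0) x + L n (fun t : ℝ => t ^ 2) x)| +
          |l| * |L n (fun t : ℝ => t ^ 0) x - 1| +
          |l| * |L n (fun t : ℝ => t ^ 2) x - x ^ 2| +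
          |f x - l * (1 + x ^ 2)| := by
        have hdec : L n f x - f x =
            ((L n f x - l * (L n (fun t : ℝ => t ^ 0) x + L n (fun t : ℝ => t ^ 2) x)) +
            l * (L n (fun t : ℝ => t ^ 0) x - 1) + l * (L n (fun t : ℝ => t ^ 2) x - x ^ 2)) -
            (f x - l * (1 + x ^ 2)) := by ring
        rw [hdec]
        refine le_trans (tri _ _) ?_
        have h2 := abs_add_le
          ((L n f x - l * (L n (fun t : ℝ => t ^ 0) x + L n (fun t : ℝ => t ^ 2) x)) +
            l * (L n (fun t : ℝ => t ^ 0) x - 1))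
          (l * (L n (fun t : ℝ => t ^ 2) x - x ^ 2))
        have h3 := abs_add_le
          (L n f x - l * (L n (fun t : ℝ => t ^ 0) x + L n (fun t : ℝ => t ^ 2) x))
          (l * (L n (fun t : ℝ => t ^ 0) x - 1))
        rw [abs_mul] at h2 h3
        linarith
      have t9 : |L n f x - l * (L n (fun t : ℝ => t ^ 0) x + L n (fun t : ℝ => t ^ 2) x)| ≤
          ε' * ((1 + A0 * (1 + x ^ 2)) + (x ^ 2 + A2 * (1 + x ^ 2))) +
          C * (1 + A0 * (1 + x ^ 2)) := by
        refine le_trans e2 ?_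
        exact add_le_add (mul_le_mul_of_nonneg_left (add_le_add t4 t8) hε'.le)
          (mul_le_mul_of_nonneg_left t4 hCnn)
      have w1 : |l| * |L n (fun t : ℝ => t ^ 0) x - 1| ≤ |l| * (A0 * (1 + x ^ 2)) :=
        mul_le_mul_of_nonneg_left k0 (abs_nonneg l)
      have w2 : |l| * |L n (fun t : ℝ => t ^ 2) x - x ^ 2| ≤ |l| * (A2 * (1 + x ^ 2)) :=
        mul_le_mul_of_nonneg_left k2 (abs_nonneg l)
      have u1 : ε' * (A0 + A2) ≤ 2 * ε' :=
        le_trans (mul_le_mul_of_nonneg_left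
          (by linarith only [hη0, hη2, hη1] : A0 + A2 ≤ 2) hε'.le) (by linarith)
      have u2 : C * A0 + |l| * A0 + |l| * A2 ≤ ε' := by
        have v1 : C * A0 ≤ C * η := mul_le_mul_of_nonneg_left hη0 hCnn
        have v2 : |l| * A0 ≤ |l| * η := mul_le_mul_of_nonneg_left hη0 (abs_nonneg l)
        have v3 : |l| * A2 ≤ |l| * η := mul_le_mul_of_nonneg_left hη2 (abs_nonneg l)
        have v4 : 0 ≤ K * (1 + 2 * x₁ + x₁ ^ 2) * η :=
          mul_nonneg (mul_nonneg hKnn hx₁poly) hηpos.le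
        have v5 : 0 ≤ M * (1 + x₁ ^ 2) * η :=
          mul_nonneg (mul_nonneg hMnn (by positivity)) hηpos.le
        linarith only [v1, v2, v3, v4, v5, hηD]
      have u3 : |L n f x - f x| ≤
          ε' * ((1 + A0 * (1 + x ^ 2)) + (x ^ 2 + A2 * (1 + x ^ 2))) +
          C * (1 + A0 * (1 + x ^ 2)) +
          |l| * (A0 * (1 + x ^ 2)) + |l| * (A2 * (1 + x ^ 2)) + ε' * (1 + x ^ 2) := by
        linarith [t6, t9, w1, w2, hgx]
      have m1 := mul_le_mul_of_nonneg_right u1 hρ.le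
      have m2 := mul_le_mul_of_nonneg_right u2 hρ.le
      linarith only [u3, m1, m2, hCx]
  -- conclude
  have hsup : (⨆ x : {x : ℝ // 0 ≤ x}, |L n f x - f x| / (1 + (x : ℝ) ^ 2)) ≤ 6 * ε' :=
    ciSup_le fun x => main x x.2
  have hsupnn' : 0 ≤ ⨆ x : {x : ℝ // 0 ≤ x}, |L n f x - f x| / (1 + (x : ℝ) ^ 2) :=
    Real.iSup_nonneg fun x => div_nonneg (abs_nonneg _) (by positivity)
  rw [Real.dist_eq, sub_zero, abs_of_nonneg hsupnn']
  calc (⨆ x : {x : ℝ // 0 ≤ x}, |L n f x - f x| / (1 + (x : ℝ) ^ 2)) ≤ 6 * ε' := hsup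
    _ < ε := by rw [hε'def]; linarith
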